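/- In the glued metric space (Z,d) from the bi-Lipschitz gluing construction: if r > 0 and a ∈ Z satisfies dist_d(a, π(∪_{i∈I} E_i)) ≥ 3r, then every b ∈ B_d(a,r) has a unique representative z_b in the disjoint union, and the map b ↦ z_b is a bijective isometry from B_d(a,r) onto B_{d̃}(z_a, r). -/

import Mathlib

open scoped ENNReal

section Gluing

variable {I : Type*} (X : Option I → Type*) [∀ i, MetricSpace (X i)]

open Classical in
/-- The distance on the disjoint union `Σ i, X i`: the distance of the piece within a piece,
and `∞` across different pieces. -/
noncomputable def dtilde : (Σ i, X i) → (Σ i, X i) → ℝ≥0∞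
  | ⟨i, x⟩, ⟨j, y⟩ => if h : i = j then edist (h ▸ x) y else ⊤

/-- The gluing relation: `x ∈ E i ⊆ X₀` is identified with `f i x ∈ X i`. -/
def glueRel (E : I → Set (X none)) (f : ∀ i, E i → X (some i)) :
    (Σ i, X i) → (Σ i, X i) → Prop :=
  fun a b => ∃ (i : I) (x : X none) (hx : x ∈ E i),
    a = ⟨none, x⟩ ∧ b = ⟨some i, f i ⟨x, hx⟩⟩

/-- The chain distance on the glued space `Z`. -/
noncomputable def chainDist (E : I → Set (X none)) (f : ∀ i, E i → X (some i))
    (a b : Quot (glueRel X E f)) : ℝ≥0∞ :=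
  sInf {S : ℝ≥0∞ | ∃ (n : ℕ) (z z' : Fin (n + 1) → Σ i, X i),
    Quot.mk (glueRel X E f) (z 0) = a ∧
    Quot.mk (glueRel X E f) (z' (Fin.last n)) = b ∧
    (∀ k : Fin n, Quot.mk (glueRel X E f) (z' k.castSucc) =
      Quot.mk (glueRel X E f) (z k.succ)) ∧
    S = ∑ k : Fin (n + 1), dtilde X (z k) (z' k)}

end Gluing


section GluingAux
open scoped ENNReal
variable {I : Type*} {X : Option I → Type*} [∀ i, MetricSpace (X i)]

lemma dtilde_mk {i : Option I} (x y : X i) : dtilde X ⟨i, x⟩ ⟨i, y⟩ = edist x y := by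
  simp [dtilde]
lemma dtilde_self (p : Σ i, X i) : dtilde X p p = 0 := by
  obtain ⟨i, x⟩ := p; simp [dtilde_mk]
lemma dtilde_comm (p q : Σ i, X i) : dtilde X p q = dtilde X q p := by
  obtain ⟨i, x⟩ := p; obtain ⟨j, y⟩ := q
  by_cases h : i = j
  · subst h; rw [dtilde_mk, dtilde_mk, edist_comm]
  · rw [dtilde, dtilde]; rw [dif_neg h, dif_neg (Ne.symm h)]

lemma dtilde_triangle (p q s : Σ i, X i) :
    dtilde X p s ≤ dtilde X p q + dtilde X q s := by
  obtain ⟨i, x⟩ := p; obtain ⟨j, y⟩ := q; obtain ⟨k, w⟩ := s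
  by_cases h1 : i = j
  · subst h1
    by_cases h2 : i = k
    · subst h2
      rw [dtilde_mk, dtilde_mk, dtilde_mk]; exact edist_triangle _ _ _
    · rw [show dtilde X ⟨i,x⟩ ⟨k,w⟩ = ⊤ from dif_neg h2,
        show dtilde X ⟨i,y⟩ ⟨k,w⟩ = ⊤ from dif_neg h2]
      simp
  · rw [show dtilde X ⟨i,x⟩ ⟨j,y⟩ = ⊤ from dif_neg h1]
    simp

lemma dtilde_polygon : ∀ (m : ℕ) (w : Fin (m+1) → Σ i, X i),
    dtilde X (w 0) (w (Fin.last m)) ≤ ∑ k : Fin m, dtilde X (w k.castSucc) (w k.succ) := by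
  intro m
  induction m with
  | zero => intro w; simp [dtilde_self]
  | succ m ih =>
    intro w
    calc dtilde X (w 0) (w (Fin.last (m+1)))
        ≤ dtilde X (w 0) (w (Fin.last m).castSucc)
          + dtilde X (w (Fin.last m).castSucc) (w (Fin.last (m+1))) := dtilde_triangle _ _ _
      _ ≤ (∑ k : Fin m, dtilde X (w k.castSucc.castSucc) (w k.succ.castSucc))
          + dtilde X (w (Fin.last m).castSucc) (w (Fin.last (m+1))) := by
          gcongr
          have := ih (w ∘ Fin.castSucc)
          simpa [Function.comp] using this
      _ = ∑ k : Fin (m+1), dtilde X (w k.castSucc) (w k.succ) := by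
          rw [Fin.sum_univ_castSucc]
          simp [Fin.succ_last]

lemma sum_ge_dtilde (n : ℕ) (z z' : Fin (n+1) → Σ i, X i)
    (hnoj : ∀ k : Fin n, z' k.castSucc = z k.succ) :
    dtilde X (z 0) (z' (Fin.last n)) ≤ ∑ k : Fin (n+1), dtilde X (z k) (z' k) := by
  set w : Fin (n+2) → Σ i, X i := Fin.snoc z (z' (Fin.last n)) with hw
  have hz : ∀ k : Fin (n+1), z k = w k.castSucc := by
    intro k; rw [hw, Fin.snoc_castSucc]
  have hz' : ∀ k : Fin (n+1), z' k = w k.succ := by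
    intro k
    rcases eq_or_ne k (Fin.last n) with rfl | hk
    · rw [hw, Fin.succ_last, Fin.snoc_last]
    · have hkn : k.1 < n := lt_of_le_of_ne (Nat.lt_succ_iff.mp k.2) (fun h => hk (Fin.ext h))
      obtain ⟨j, rfl⟩ : ∃ j : Fin n, j.castSucc = k := ⟨⟨k.1, hkn⟩, Fin.ext rfl⟩
      rw [hnoj j, Fin.succ_castSucc, hw, Fin.snoc_castSucc]
  calc dtilde X (z 0) (z' (Fin.last n)) = dtilde X (w 0) (w (Fin.last (n+1))) := by
        rw [hz 0, hz' (Fin.last n), Fin.succ_last, Fin.castSucc_zero]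
    _ ≤ ∑ k : Fin (n+1), dtilde X (w k.castSucc) (w k.succ) := dtilde_polygon _ w
    _ = ∑ k : Fin (n+1), dtilde X (z k) (z' k) := by
        apply Finset.sum_congr rfl
        intro k _
        rw [hz k, hz' k]

variable {E : I → Set (X none)} {f : ∀ i, E i → X (some i)}



lemma glueRel_det_left (hdisj : Pairwise (Function.onFun Disjoint E))
    {z w w' : Σ i, X i} (h : glueRel X E f z w) (h' : glueRel X E f z w') : w = w' := by
  obtain ⟨i, x, hx, rfl, rfl⟩ := h
  obtain ⟨i', x', hx', he, rfl⟩ := h'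
  simp only [Sigma.mk.inj_iff, heq_eq_eq, true_and] at he
  subst he
  obtain rfl : i = i' := by
    by_contra hne
    exact Set.disjoint_left.1 (hdisj hne) hx hx'
  rfl

lemma glueRel_det_right (hinj : ∀ i, Function.Injective (f i))
    {z z' w : Σ i, X i} (h : glueRel X E f z w) (h' : glueRel X E f z' w) : z = z' := by
  obtain ⟨i, x, hx, rfl, rfl⟩ := h
  obtain ⟨i', x', hx', rfl, he⟩ := h'
  simp only [Sigma.mk.inj_iff, Option.some.injEq] at he
  obtain ⟨rfl, he2⟩ := he
  have : f i ⟨x, hx⟩ = f i ⟨x', hx'⟩ := eq_of_heq he2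
  have := hinj i this
  simp only [Subtype.mk.injEq] at this
  subst this; rfl

lemma glueRel_no_comp {z w u : Σ i, X i} (h : glueRel X E f z w)
    (h' : glueRel X E f w u) : False := by
  obtain ⟨i, x, hx, rfl, rfl⟩ := h
  obtain ⟨i', x', hx', he, -⟩ := h'
  simp only [Sigma.mk.inj_iff] at he
  exact Option.some_ne_none _ he.1

lemma eqvGen_glueRel_iff (hdisj : Pairwise (Function.onFun Disjoint E))
    (hinj : ∀ i, Function.Injective (f i)) {z w : Σ i, X i} :
    Relation.EqvGen (glueRel X E f) z w ↔ z = w ∨ glueRel X E f z w ∨ glueRel X E f w z := by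
  constructor
  · intro h
    induction h with
    | rel x y hxy => exact Or.inr (Or.inl hxy)
    | refl x => exact Or.inl rfl
    | symm x y _ ih => tauto
    | trans x y u _ _ ih1 ih2 =>
      rcases ih1 with rfl | h1 | h1
      · exact ih2
      · rcases ih2 with rfl | h2 | h2
        · exact Or.inr (Or.inl h1)
        · exact absurd (glueRel_no_comp h1 h2) id
        · exact Or.inl (glueRel_det_right hinj h1 h2)
      · rcases ih2 with rfl | h2 | h2
        · exact Or.inr (Or.inr h1)
        · exact Or.inl (glueRel_det_left hdisj h1 h2)
        · exact absurd (glueRel_no_comp h2 h1) id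
  · rintro (rfl | h | h)
    · exact Relation.EqvGen.refl _
    · exact Relation.EqvGen.rel _ _ h
    · exact Relation.EqvGen.symm _ _ (Relation.EqvGen.rel _ _ h)



lemma chainDist_le_dtilde (p q : Σ i, X i) :
    chainDist X E f (Quot.mk _ p) (Quot.mk _ q) ≤ dtilde X p q := by
  apply sInf_le
  refine ⟨0, fun _ => p, fun _ => q, rfl, rfl, fun k => k.elim0, ?_⟩
  simp

/-- Truncation: chain distance from start to the `k`-th right endpoint is at most
the total sum. -/
lemma chainDist_le_sum (n : ℕ) (z z' : Fin (n+1) → Σ i, X i)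
    (hj : ∀ k : Fin n, Quot.mk (glueRel X E f) (z' k.castSucc) =
      Quot.mk (glueRel X E f) (z k.succ)) (k : Fin (n+1)) :
    chainDist X E f (Quot.mk _ (z 0)) (Quot.mk _ (z' k)) ≤
      ∑ j : Fin (n+1), dtilde X (z j) (z' j) := by
  have hle : k.1 + 1 ≤ n + 1 := k.2
  set F : Fin (n+1) → ℝ≥0∞ := fun j => dtilde X (z j) (z' j) with hF
  have h1 : chainDist X E f (Quot.mk _ (z 0)) (Quot.mk _ (z' k)) ≤
      ∑ j : Fin (k.1+1), F (Fin.castLE hle j) := by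
    apply sInf_le
    refine ⟨k.1, fun j => z (Fin.castLE hle j), fun j => z' (Fin.castLE hle j), ?_, ?_, ?_, rfl⟩
    · rfl
    · exact congrArg (Quot.mk _) (congrArg z' (Fin.ext rfl))
    · intro j
      have hjn : j.1 < n := lt_of_lt_of_le j.2 (Nat.lt_succ_iff.mp k.2)
      have := hj ⟨j.1, hjn⟩
      convert this using 3 <;> exact Fin.ext rfl
  refine h1.trans ?_
  calc ∑ j : Fin (k.1+1), F (Fin.castLE hle j)
      = ∑ j ∈ Finset.univ.map (Fin.castLEEmb hle), F j := by
        rw [Finset.sum_map]; rfl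
    _ ≤ ∑ j : Fin (n+1), F j := Finset.sum_le_sum_of_subset (Finset.subset_univ _)

lemma chainDist_triangle (a b c : Quot (glueRel X E f)) :
    chainDist X E f a c ≤ chainDist X E f a b + chainDist X E f b c := by
  have key : ∀ u ∈ {S : ℝ≥0∞ | ∃ (n : ℕ) (z z' : Fin (n + 1) → Σ i, X i),
      Quot.mk (glueRel X E f) (z 0) = a ∧
      Quot.mk (glueRel X E f) (z' (Fin.last n)) = b ∧
      (∀ k : Fin n, Quot.mk (glueRel X E f) (z' k.castSucc) =
        Quot.mk (glueRel X E f) (z k.succ)) ∧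
      S = ∑ k : Fin (n + 1), dtilde X (z k) (z' k)},
      ∀ v ∈ {S : ℝ≥0∞ | ∃ (n : ℕ) (z z' : Fin (n + 1) → Σ i, X i),
      Quot.mk (glueRel X E f) (z 0) = b ∧
      Quot.mk (glueRel X E f) (z' (Fin.last n)) = c ∧
      (∀ k : Fin n, Quot.mk (glueRel X E f) (z' k.castSucc) =
        Quot.mk (glueRel X E f) (z k.succ)) ∧
      S = ∑ k : Fin (n + 1), dtilde X (z k) (z' k)},
      chainDist X E f a c ≤ u + v := by
    rintro u ⟨n₁, z₁, z₁', ha, hb, hj₁, rfl⟩ v ⟨n₂, z₂, z₂', hb', hc, hj₂, rfl⟩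
    apply sInf_le
    refine ⟨n₁ + 1 + n₂,
      (Fin.append (m := n₁+1) (n := n₂+1) z₁ z₂ : Fin (n₁ + 1 + n₂ + 1) → Σ i, X i),
      (Fin.append (m := n₁+1) (n := n₂+1) z₁' z₂' : Fin (n₁ + 1 + n₂ + 1) → Σ i, X i),
      ?_, ?_, ?_, ?_⟩
    · show Quot.mk _ (Fin.append z₁ z₂ (0 : Fin (n₁ + 1 + n₂ + 1))) = a
      have h0 : (0 : Fin (n₁ + 1 + n₂ + 1)) = Fin.castAdd (n₂+1) (0 : Fin (n₁+1)) :=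
        Fin.ext (by simp)
      rw [h0, Fin.append_left]
      exact ha
    · show Quot.mk _ (Fin.append z₁' z₂' (Fin.last (n₁ + 1 + n₂) :
        Fin (n₁ + 1 + n₂ + 1))) = c
      have h0 : (Fin.last (n₁ + 1 + n₂) : Fin (n₁ + 1 + n₂ + 1)) =
          Fin.natAdd (n₁+1) (Fin.last n₂) := Fin.ext (by simp only [Fin.val_last, Fin.coe_natAdd])
      rw [h0, Fin.append_right]
      exact hc
    · intro k
      show Quot.mk _ (Fin.append z₁' z₂' (k.castSucc : Fin (n₁ + 1 + n₂ + 1))) =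
        Quot.mk _ (Fin.append z₁ z₂ (k.succ : Fin (n₁ + 1 + n₂ + 1)))
      rcases lt_trichotomy k.1 n₁ with hlt | heq | hgt
      · have e1 : (k.castSucc : Fin (n₁ + 1 + n₂ + 1)) =
            Fin.castAdd (n₂+1) (⟨k.1, by omega⟩ : Fin (n₁+1)) := Fin.ext rfl
        have e2 : (k.succ : Fin (n₁ + 1 + n₂ + 1)) =
            Fin.castAdd (n₂+1) (⟨k.1+1, by omega⟩ : Fin (n₁+1)) := Fin.ext rfl
        rw [e1, e2, Fin.append_left, Fin.append_left]
        have e3 : (⟨k.1, by omega⟩ : Fin (n₁+1)) = (⟨k.1, hlt⟩ : Fin n₁).castSucc :=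
          Fin.ext rfl
        have e4 : (⟨k.1+1, by omega⟩ : Fin (n₁+1)) = (⟨k.1, hlt⟩ : Fin n₁).succ :=
          Fin.ext rfl
        rw [e3, e4]
        exact hj₁ _
      · have e1 : (k.castSucc : Fin (n₁ + 1 + n₂ + 1)) =
            Fin.castAdd (n₂+1) (Fin.last n₁) := Fin.ext (by
              simp only [Fin.coe_castSucc, Fin.coe_castAdd, Fin.val_last]; omega)
        have e2 : (k.succ : Fin (n₁ + 1 + n₂ + 1)) =
            Fin.natAdd (n₁+1) (0 : Fin (n₂+1)) := Fin.ext (by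
              simp only [Fin.val_succ, Fin.coe_natAdd, Fin.val_zero]; omega)
        rw [e1, e2, Fin.append_left, Fin.append_right]
        rw [hb, hb']
      · have hk2 : k.1 - (n₁+1) < n₂ := by omega
        have e1 : (k.castSucc : Fin (n₁ + 1 + n₂ + 1)) =
            Fin.natAdd (n₁+1) ((⟨k.1 - (n₁+1), hk2⟩ : Fin n₂).castSucc) := Fin.ext (by
              simp only [Fin.coe_castSucc, Fin.coe_natAdd]; omega)
        have e2 : (k.succ : Fin (n₁ + 1 + n₂ + 1)) =
            Fin.natAdd (n₁+1) ((⟨k.1 - (n₁+1), hk2⟩ : Fin n₂).succ) := Fin.ext (by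
              simp only [Fin.val_succ, Fin.coe_natAdd]; omega)
        rw [e1, e2, Fin.append_right, Fin.append_right]
        exact hj₂ _
    · have hsum : ∑ k : Fin ((n₁+1) + (n₂+1)),
          dtilde X (Fin.append z₁ z₂ k) (Fin.append z₁' z₂' k)
          = (∑ k : Fin (n₁+1), dtilde X (z₁ k) (z₁' k))
            + ∑ k : Fin (n₂+1), dtilde X (z₂ k) (z₂' k) := by
        rw [Fin.sum_univ_add]
        congr 1
        · refine Finset.sum_congr rfl fun j _ => ?_
          rw [Fin.append_left, Fin.append_left]
        · refine Finset.sum_congr rfl fun j _ => ?_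
          rw [Fin.append_right, Fin.append_right]
      exact hsum.symm
  rcases eq_or_ne (chainDist X E f a b) ⊤ with htop | hne
  · rw [htop, top_add]; exact le_top
  rcases eq_or_ne (chainDist X E f b c) ⊤ with htop2 | hne2
  · rw [htop2, add_top]; exact le_top
  conv_rhs => rw [chainDist, ENNReal.sInf_add]
  refine le_iInf₂ fun u hu => ?_
  conv_rhs => rw [add_comm, chainDist, ENNReal.sInf_add]
  refine le_iInf₂ fun v hv => ?_
  rw [add_comm]
  exact key u hu v hv

end GluingAux

/-- In the glued space `(Z,d)`: if `a ∈ Z` is at chain distance at least `3r` from the image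
of the gluing sets `⋃ E i`, then every `b` in the ball `B_d(a, r)` has a unique
representative in the disjoint union, and assigning to `b` its representative is a bijective
isometry from `B_d(a,r)` onto `B_{d̃}(z_a, r)`, where `z_a` is the representative of `a`. -/
theorem glued_space_locally_isometric
    {I : Type*} (X : Option I → Type*) [∀ i, MetricSpace (X i)] [∀ i, CompactSpace (X i)]
    (E : I → Set (X none)) (f : ∀ i, E i → X (some i)) (L : ℝ) (hL : 1 ≤ L)
    (hE : ∀ i, IsCompact (E i) ∧ IsConnected (E i))
    (hdisj : Pairwise (Function.onFun Disjoint E))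
    (hf : ∀ i, ∀ x y : E i, dist (x : X none) (y : X none) / L ≤ dist (f i x) (f i y) ∧
      dist (f i x) (f i y) ≤ L * dist (x : X none) (y : X none))
    (r : ℝ) (hr : 0 < r) (a : Quot (glueRel X E f)) (za : Σ i, X i)
    (hza : Quot.mk (glueRel X E f) za = a)
    (hfar : ∀ (i : I) (x : X none), x ∈ E i →
      ENNReal.ofReal (3 * r) ≤ chainDist X E f a (Quot.mk (glueRel X E f) ⟨none, x⟩)) :
    ∃ g : {b : Quot (glueRel X E f) // chainDist X E f a b < ENNReal.ofReal r} →
        Σ i, X i,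
      (∀ b, Quot.mk (glueRel X E f) (g b) = b.1) ∧
      (∀ b (z : Σ i, X i), Quot.mk (glueRel X E f) z = b.1 → z = g b) ∧
      (∀ b c, dtilde X (g b) (g c) = chainDist X E f b.1 c.1) ∧
      Set.range g = {z : Σ i, X i | dtilde X za z < ENNReal.ofReal r} := by
  classical
  have hinj : ∀ i, Function.Injective (f i) := by
    intro i x y hxy
    have h1 := (hf i x y).1
    rw [hxy, dist_self] at h1
    have hL0 : (0:ℝ) < L := lt_of_lt_of_le one_pos hL
    have hd0 : dist (x : X none) (y : X none) ≤ 0 := by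
      rcases div_nonpos_iff.mp h1 with ⟨-, h⟩ | ⟨h, -⟩
      · linarith
      · exact h
    have : dist (x : X none) (y : X none) = 0 := le_antisymm hd0 dist_nonneg
    exact Subtype.ext (dist_eq_zero.mp this)
  set Q : (Σ i, X i) → Quot (glueRel X E f) := Quot.mk (glueRel X E f) with hQ
  set Glue : Quot (glueRel X E f) → Prop :=
    fun p => ∃ i x, x ∈ E i ∧ p = Q ⟨none, x⟩ with hGlue
  have hfar' : ∀ p, Glue p → ENNReal.ofReal (3*r) ≤ chainDist X E f a p := by
    rintro p ⟨i, x, hx, rfl⟩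
    exact hfar i x hx
  have hball_notGlue : ∀ p, chainDist X E f a p < ENNReal.ofReal r → ¬ Glue p := by
    intro p hp hg
    have h3 := hfar' p hg
    have hle : ENNReal.ofReal r ≤ ENNReal.ofReal (3*r) :=
      ENNReal.ofReal_le_ofReal (by linarith)
    exact absurd (lt_of_lt_of_le hp (hle.trans h3)) (lt_irrefl _)
  have huniq : ∀ p : Quot (glueRel X E f), ¬ Glue p →
      ∀ w w', Q w = p → Q w' = p → w = w' := by
    intro p hng w w' hw hw'
    have heqv : Relation.EqvGen (glueRel X E f) w w' := Quot.eq.1 (hw.trans hw'.symm)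
    rcases (eqvGen_glueRel_iff hdisj hinj).1 heqv with rfl | h | h
    · rfl
    · obtain ⟨i, x, hx, rfl, -⟩ := h
      exact absurd ⟨i, x, hx, hw.symm⟩ hng
    · obtain ⟨i, x, hx, rfl, -⟩ := h
      exact absurd ⟨i, x, hx, hw'.symm⟩ hng
  have haa : chainDist X E f a a < ENNReal.ofReal r := by
    calc chainDist X E f a a ≤ dtilde X za za := by
          rw [← hza]; exact chainDist_le_dtilde za za
      _ = 0 := dtilde_self za
      _ < ENNReal.ofReal r := ENNReal.ofReal_pos.2 hr
  have haG : ¬ Glue a := hball_notGlue a haa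
  have huniqa : ∀ w, Q w = a → w = za := fun w hw => huniq a haG w za hw hza
  -- the master lower bound
  have master : ∀ (p q : Quot (glueRel X E f)) (zp zq : Σ i, X i),
      (∀ w, Q w = p → w = zp) → (∀ w, Q w = q → w = zq) →
      chainDist X E f a p < ENNReal.ofReal r →
      min (dtilde X zp zq) (ENNReal.ofReal (2*r)) ≤ chainDist X E f p q := by
    intro p q zp zq hup huq hpball
    apply le_sInf
    rintro S ⟨n, z, z', h1, h2, hj, rfl⟩
    by_cases hnoj : ∀ k : Fin n, z' k.castSucc = z k.succ
    · refine (min_le_left _ _).trans ?_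
      have hz0 : z 0 = zp := hup _ h1
      have hzl : z' (Fin.last n) = zq := huq _ h2
      rw [← hz0, ← hzl]
      exact sum_ge_dtilde n z z' hnoj
    · refine (min_le_right _ _).trans ?_
      push_neg at hnoj
      obtain ⟨k, hk⟩ := hnoj
      have hquot : Q (z' k.castSucc) = Q (z k.succ) := hj k
      have heqv : Relation.EqvGen (glueRel X E f) (z' k.castSucc) (z k.succ) :=
        Quot.eq.1 hquot
      have hglue : Glue (Q (z' k.castSucc)) := by
        rcases (eqvGen_glueRel_iff hdisj hinj).1 heqv with h | h | h
        · exact absurd h hk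
        · obtain ⟨i, x, hx, he, -⟩ := h
          exact ⟨i, x, hx, by rw [he]⟩
        · obtain ⟨i, x, hx, he, -⟩ := h
          exact ⟨i, x, hx, by rw [hquot, he]⟩
      have hpre : chainDist X E f p (Q (z' k.castSucc)) ≤
          ∑ j : Fin (n+1), dtilde X (z j) (z' j) := by
        have h := chainDist_le_sum n z z' hj k.castSucc
        rwa [h1] at h
      have h3 : ENNReal.ofReal (3*r) ≤
          chainDist X E f a p + chainDist X E f p (Q (z' k.castSucc)) :=
        (hfar' _ hglue).trans (chainDist_triangle a p _)
      have h2r : ENNReal.ofReal (2*r) ≤ chainDist X E f p (Q (z' k.castSucc)) := by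
        by_contra hcon
        push_neg at hcon
        have hadd : chainDist X E f a p + chainDist X E f p (Q (z' k.castSucc)) <
            ENNReal.ofReal r + ENNReal.ofReal (2*r) := ENNReal.add_lt_add hpball hcon
        rw [← ENNReal.ofReal_add (by linarith) (by linarith)] at hadd
        have : ENNReal.ofReal (3*r) < ENNReal.ofReal (r + 2*r) := lt_of_le_of_lt h3 hadd
        rw [show r + 2*r = 3*r by ring] at this
        exact lt_irrefl _ this
      exact h2r.trans hpre
  choose g hg using fun b : {b : Quot (glueRel X E f) //
      chainDist X E f a b < ENNReal.ofReal r} => Quot.exists_rep b.1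
  have hgu : ∀ b w, Q w = b.1 → w = g b :=
    fun b w hw => huniq b.1 (hball_notGlue _ b.2) w (g b) hw (hg b)
  have step1 : ∀ b, dtilde X za (g b) ≤ chainDist X E f a b.1 := by
    intro b
    have h := master a b.1 za (g b) huniqa (hgu b) haa
    rcases le_total (dtilde X za (g b)) (ENNReal.ofReal (2*r)) with hc | hc
    · rwa [min_eq_left hc] at h
    · rw [min_eq_right hc] at h
      exfalso
      have h1 := lt_of_le_of_lt h b.2
      have h2 : ENNReal.ofReal r ≤ ENNReal.ofReal (2*r) :=
        ENNReal.ofReal_le_ofReal (by linarith)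
      exact absurd (lt_of_lt_of_le h1 h2) (lt_irrefl _)
  have step1' : ∀ b, dtilde X za (g b) < ENNReal.ofReal r :=
    fun b => lt_of_le_of_lt (step1 b) b.2
  refine ⟨g, hg, hgu, ?_, ?_⟩
  · intro b c
    have hle : chainDist X E f b.1 c.1 ≤ dtilde X (g b) (g c) := by
      rw [← hg b, ← hg c]
      exact chainDist_le_dtilde _ _
    have hlt2 : dtilde X (g b) (g c) < ENNReal.ofReal (2*r) := by
      calc dtilde X (g b) (g c) ≤ dtilde X (g b) za + dtilde X za (g c) :=
            dtilde_triangle _ _ _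
        _ = dtilde X za (g b) + dtilde X za (g c) := by rw [dtilde_comm]
        _ < ENNReal.ofReal r + ENNReal.ofReal r := ENNReal.add_lt_add (step1' b) (step1' c)
        _ = ENNReal.ofReal (2*r) := by
            rw [← ENNReal.ofReal_add (le_of_lt hr) (le_of_lt hr)]
            norm_num [two_mul]
    have h := master b.1 c.1 (g b) (g c) (hgu b) (hgu c) b.2
    rw [min_eq_left hlt2.le] at h
    exact le_antisymm h hle
  · ext z
    constructor
    · rintro ⟨b, rfl⟩
      exact step1' b
    · intro hz
      have hball : chainDist X E f a (Q z) < ENNReal.ofReal r := by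
        calc chainDist X E f a (Q z) ≤ dtilde X za z := by
              rw [← hza]; exact chainDist_le_dtilde za z
          _ < ENNReal.ofReal r := hz
      exact ⟨⟨Q z, hball⟩, (hgu ⟨Q z, hball⟩ z rfl).symm⟩
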